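/- Fix r∈(0,1), integers N>n≥1, and set w=(N−1/2)/n. Let c be a nonnegative cost function, α>0, and suppose c(x) ≤ β₁x^α for all x≥w, where β₁>0. With c_{n,i} := ∫_{J_{n,i}} n·c(x) dx, one has Σ_{i≥N} c_{n,i} r^{i−N} ≤ β₁·ℓ_α·( w^α/(1−r) + (2(α/e)^α·log(1/r) + Γ(α+1)) / ( r·n^α·(log(1/r))^{α+1} ) ), where ℓ_α := max(1, 2^{α−1}) and Γ is the Gamma function. -/

import Mathlib

open MeasureTheory Filter Real Set
open scoped ENNReal NNReal Classical

noncomputable section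

/-- Shift operator on Borel measures: `(shiftMeasure a μ) B = μ (B - a)`. -/
def shiftMeasure (a : ℝ) (μ : Measure ℝ) : Measure ℝ := μ.map (· + a)

/-- Kullback–Leibler divergence between Borel measures on `ℝ`. -/
def KLdiv (μ ν : Measure ℝ) : ℝ≥0∞ :=
  if μ ≪ ν ∧ Integrable (llr μ ν) μ then ENNReal.ofReal (∫ x, llr μ ν x ∂μ) else ⊤

/-- Standing assumptions on the cost function. -/
structure IsCostFun (c : ℝ → ℝ) (α β : ℝ) : Prop where
  nonneg : ∀ x, 0 ≤ c x
  zero : c 0 = 0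
  even : ∀ x, c (-x) = c x
  mono : ∀ x y : ℝ, |x| ≤ |y| → c x ≤ c y
  continuous : Continuous c
  tail : Tendsto (fun x : ℝ => c x / (β * x ^ α)) atTop (nhds 1)


/-- The interval `J_{n,i}` of length `1/n` centered at `i/n`. -/
def Jset (n : ℕ) (i : ℤ) : Set ℝ :=
  if 0 < i then Set.Ioc (((i : ℝ) - 1/2) / n) (((i : ℝ) + 1/2) / n)
  else if i < 0 then Set.Ico (((i : ℝ) - 1/2) / n) (((i : ℝ) + 1/2) / n)
  else Set.Icc (-(1 / (2 * (n : ℝ)))) (1 / (2 * (n : ℝ)))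

namespace CactusAux

lemma monoOn (t α : ℝ) (ht : 0 < t) (hα : 0 < α) :
    MonotoneOn (fun x : ℝ => x ^ α * Real.exp (-(t * x))) (Icc 0 (α / t)) := by
  intro x hx y hy hxy
  rcases eq_or_lt_of_le hx.1 with h0 | h0
  · simp only [← h0, Real.zero_rpow hα.ne', zero_mul]
    exact mul_nonneg (Real.rpow_nonneg hy.1 α) (Real.exp_nonneg _)
  · have hy0 : 0 < y := lt_of_lt_of_le h0 hxy
    have hyx : 0 < y / x := by positivity
    have hkey : t * (y - x) ≤ α * Real.log (y / x) := by
      have h1 : 1 - x / y ≤ Real.log (y / x) := by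
        have h := Real.log_le_sub_one_of_pos (show 0 < x / y by positivity)
        have hlog : Real.log (y / x) = - Real.log (x / y) := by
          rw [← Real.log_inv, inv_div]
        linarith
      have hty : t * y ≤ α := by
        have h2 := hy.2
        calc t * y ≤ t * (α / t) := by nlinarith
          _ = α := by field_simp
      have h2 : t * (y - x) ≤ α * (1 - x / y) := by
        have e : 1 - x / y = (y - x) / y := by field_simp
        rw [e, ← mul_div_assoc, le_div_iff₀ hy0]
        nlinarith
      nlinarith
    have hexp : Real.exp (t * (y - x)) ≤ (y / x) ^ α := by
      rw [← Real.exp_log (Real.rpow_pos_of_pos hyx α), Real.log_rpow hyx]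
      exact Real.exp_le_exp.2 (by linarith [hkey])
    have hxa : (0:ℝ) ≤ x ^ α := (Real.rpow_pos_of_pos h0 α).le
    calc x ^ α * Real.exp (-(t * x))
        = x ^ α * Real.exp (t * (y - x)) * Real.exp (-(t * y)) := by
          rw [mul_assoc, ← Real.exp_add]; congr 2; ring
      _ ≤ x ^ α * (y / x) ^ α * Real.exp (-(t * y)) := by
          apply mul_le_mul_of_nonneg_right _ (Real.exp_nonneg _)
          exact mul_le_mul_of_nonneg_left hexp hxa
      _ = y ^ α * Real.exp (-(t * y)) := by
          rw [← Real.mul_rpow h0.le hyx.le]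
          congr 2
          field_simp

lemma antiOn (t α : ℝ) (ht : 0 < t) (hα : 0 < α) :
    AntitoneOn (fun x : ℝ => x ^ α * Real.exp (-(t * x))) (Ici (α / t)) := by
  intro x hx y hy hxy
  have h0 : 0 < x := lt_of_lt_of_le (by positivity) hx
  have hy0 : 0 < y := lt_of_lt_of_le h0 hxy
  have hyx : 0 < y / x := by positivity
  have hkey : α * Real.log (y / x) ≤ t * (y - x) := by
    have h1 : Real.log (y / x) ≤ y / x - 1 := Real.log_le_sub_one_of_pos hyx
    have htx : α ≤ t * x := by
      have h2 : α / t ≤ x := hx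
      calc α = t * (α / t) := by field_simp
        _ ≤ t * x := by nlinarith
    have h2 : α * (y / x - 1) ≤ t * (y - x) := by
      have e : y / x - 1 = (y - x) / x := by field_simp
      rw [e, ← mul_div_assoc, div_le_iff₀ h0]
      nlinarith
    nlinarith [Real.log_le_sub_one_of_pos hyx, mul_le_mul_of_nonneg_left h1 hα.le]
  have hexp : (y / x) ^ α ≤ Real.exp (t * (y - x)) := by
    rw [← Real.exp_log (Real.rpow_pos_of_pos hyx α), Real.log_rpow hyx]
    exact Real.exp_le_exp.2 (by linarith [hkey])
  have hxa : (0:ℝ) ≤ x ^ α := (Real.rpow_pos_of_pos h0 α).le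
  calc y ^ α * Real.exp (-(t * y))
      = x ^ α * (y / x) ^ α * Real.exp (-(t * y)) := by
        rw [← Real.mul_rpow h0.le hyx.le]; congr 2; field_simp
    _ ≤ x ^ α * Real.exp (t * (y - x)) * Real.exp (-(t * y)) := by
        apply mul_le_mul_of_nonneg_right _ (Real.exp_nonneg _)
        exact mul_le_mul_of_nonneg_left hexp hxa
    _ = x ^ α * Real.exp (-(t * x)) := by
        rw [mul_assoc, ← Real.exp_add]; congr 2; ring

lemma le_maxval (t α x : ℝ) (ht : 0 < t) (hα : 0 < α) (hx : 0 ≤ x) :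
    x ^ α * Real.exp (-(t * x)) ≤ (α / (Real.exp 1 * t)) ^ α := by
  have hxs : 0 < α / t := by positivity
  have hval : (α / t) ^ α * Real.exp (-(t * (α / t))) = (α / (Real.exp 1 * t)) ^ α := by
    rw [show -(t * (α / t)) = -α by field_simp,
        show α / (Real.exp 1 * t) = (α / t) / (Real.exp 1) by ring,
        Real.div_rpow hxs.le (Real.exp_pos 1).le, Real.exp_one_rpow, Real.exp_neg]
    ring
  rcases le_total x (α / t) with h | h
  · rw [← hval]
    exact monoOn t α ht hα ⟨hx, h⟩ ⟨hxs.le, le_refl _⟩ h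
  · rw [← hval]
    exact antiOn t α ht hα (Set.mem_Ici.2 (le_refl _)) h h

lemma integrableAux (t α : ℝ) (ht : 0 < t) (hα : 0 < α) :
    IntegrableOn (fun x : ℝ => x ^ α * Real.exp (-(t * x))) (Ioi 0) := by
  have h := integrableOn_rpow_mul_exp_neg_mul_rpow (s := α) (p := 1) (b := t)
    (by linarith) zero_lt_one ht
  refine h.congr_fun (fun x _ => ?_) measurableSet_Ioi
  simp only [Real.rpow_one, neg_mul]

lemma integralAux (t α : ℝ) (ht : 0 < t) (hα : 0 < α) :
    ∫ x in Ioi (0:ℝ), x ^ α * Real.exp (-(t * x)) = Real.Gamma (α + 1) * (1 / t) ^ (α + 1) := by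
  have h := Real.integral_rpow_mul_exp_neg_mul_Ioi (a := α + 1) (r := t) (by linarith) ht
  simp only [add_sub_cancel_right] at h
  rw [h, mul_comm]


lemma rpow_add_le_max (a b p : ℝ) (ha : 0 ≤ a) (hb : 0 ≤ b) (hp : 0 < p) :
    (a + b) ^ p ≤ max 1 (2 ^ (p - 1)) * (a ^ p + b ^ p) := by
  have hab : (0:ℝ) ≤ a ^ p + b ^ p := by
    have := Real.rpow_nonneg ha p
    have := Real.rpow_nonneg hb p
    linarith
  rcases le_total p 1 with h1 | h1
  · have key : (a + b) ^ p ≤ a ^ p + b ^ p := by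
      have h := NNReal.rpow_add_le_add_rpow (a.toNNReal) (b.toNNReal) hp.le h1
      calc (a + b) ^ p = (((a.toNNReal + b.toNNReal : ℝ≥0) : ℝ)) ^ p := by
            rw [NNReal.coe_add, Real.coe_toNNReal _ ha, Real.coe_toNNReal _ hb]
        _ = (((a.toNNReal + b.toNNReal) ^ p : ℝ≥0) : ℝ) := (NNReal.coe_rpow _ _).symm
        _ ≤ ((a.toNNReal ^ p + b.toNNReal ^ p : ℝ≥0) : ℝ) := by exact_mod_cast h
        _ = a ^ p + b ^ p := by
            rw [NNReal.coe_add, NNReal.coe_rpow, NNReal.coe_rpow,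
              Real.coe_toNNReal _ ha, Real.coe_toNNReal _ hb]
    calc (a + b) ^ p ≤ a ^ p + b ^ p := key
      _ = 1 * (a ^ p + b ^ p) := (one_mul _).symm
      _ ≤ max 1 (2 ^ (p - 1)) * (a ^ p + b ^ p) :=
          mul_le_mul_of_nonneg_right (le_max_left _ _) hab
  · have hc := convexOn_rpow h1
    have h := hc.2 (Set.mem_Ici.2 ha) (Set.mem_Ici.2 hb)
      (by norm_num : (0:ℝ) ≤ 1/2) (by norm_num : (0:ℝ) ≤ 1/2) (by norm_num)
    simp only [smul_eq_mul] at h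
    have h2 : ((a + b) / 2) ^ p ≤ (a ^ p + b ^ p) / 2 := by
      have e : (1/2 : ℝ) * a + (1/2 : ℝ) * b = (a + b) / 2 := by ring
      rw [e] at h
      linarith
    have e2 : (a + b) ^ p = 2 ^ p * ((a + b) / 2) ^ p := by
      rw [← Real.mul_rpow (by norm_num) (by positivity)]
      congr 1
      ring
    calc (a + b) ^ p = 2 ^ p * ((a + b) / 2) ^ p := e2
      _ ≤ 2 ^ p * ((a ^ p + b ^ p) / 2) :=
          mul_le_mul_of_nonneg_left h2 (Real.rpow_nonneg (by norm_num) p)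
      _ = 2 ^ (p - 1) * (a ^ p + b ^ p) := by
          rw [Real.rpow_sub (by norm_num : (0:ℝ) < 2), Real.rpow_one]
          ring
      _ ≤ max 1 (2 ^ (p - 1)) * (a ^ p + b ^ p) :=
          mul_le_mul_of_nonneg_right (le_max_right _ _) hab


lemma core_sum (t α : ℝ) (ht : 0 < t) (hα : 0 < α) (M : ℕ) :
    ∑ k ∈ Finset.Icc 1 M, (k:ℝ) ^ α * Real.exp (-(t * k)) ≤
      2 * (α / (Real.exp 1 * t)) ^ α + Real.Gamma (α + 1) * (1 / t) ^ (α + 1) := by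
  set f : ℝ → ℝ := fun x => x ^ α * Real.exp (-(t * x)) with hf
  set xs := α / t with hxsdef
  have hxs0 : 0 < xs := by positivity
  set m := ⌊xs⌋₊ with hmdef
  have hmle : (m:ℝ) ≤ xs := Nat.floor_le hxs0.le
  have hmlt : xs < (m:ℝ) + 1 := Nat.lt_floor_add_one xs
  rw [← Finset.sum_filter_add_sum_filter_not (Finset.Icc 1 M) (fun k => k = m ∨ k = m + 1)]
  have hCmax : ∀ k : ℕ, f (k:ℝ) ≤ (α / (Real.exp 1 * t)) ^ α :=
    fun k => le_maxval t α k ht hα (Nat.cast_nonneg k)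
  apply add_le_add
  · -- at most two exceptional terms
    set F := (Finset.Icc 1 M).filter (fun k => k = m ∨ k = m + 1) with hF
    have hsub : F ⊆ {m, m + 1} := by
      intro k hk
      simp only [hF, Finset.mem_filter] at hk
      simp only [Finset.mem_insert, Finset.mem_singleton]
      tauto
    calc ∑ k ∈ F, f (k:ℝ) ≤ F.card • ((α / (Real.exp 1 * t)) ^ α) :=
          Finset.sum_le_card_nsmul _ _ _ (fun k _ => hCmax k)
      _ ≤ 2 * (α / (Real.exp 1 * t)) ^ α := by
          rw [nsmul_eq_mul]
          have hc : (F.card : ℝ) ≤ 2 := by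
            have h1 := Finset.card_le_card hsub
            have h2 : ({m, m + 1} : Finset ℕ).card ≤ 2 := by
              apply le_trans (Finset.card_insert_le _ _)
              simp
            exact_mod_cast le_trans h1 h2
          exact mul_le_mul_of_nonneg_right hc (Real.rpow_nonneg (by positivity) α)
  · set T := (Finset.Icc 1 M).filter (fun k => ¬(k = m ∨ k = m + 1)) with hT
    set A : ℕ → ℝ := fun k => if (k:ℝ) + 1 ≤ xs then (k:ℝ) else (k:ℝ) - 1 with hA
    have hprop : ∀ k ∈ T, (A k = (k:ℝ) ∧ (k:ℝ) + 1 ≤ xs) ∨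
        (A k = (k:ℝ) - 1 ∧ xs ≤ (k:ℝ) - 1 ∧ 1 ≤ k) := by
      intro k hk
      simp only [hT, Finset.mem_filter, Finset.mem_Icc, not_or] at hk
      obtain ⟨⟨hk1, hkM⟩, hkm, hkm1⟩ := hk
      by_cases h : (k:ℝ) + 1 ≤ xs
      · exact Or.inl ⟨if_pos h, h⟩
      · right
        refine ⟨if_neg h, ?_, hk1⟩
        have h1 : m ≤ k := by
          by_contra hcon
          push_neg at hcon
          have hk1m : (k:ℝ) + 1 ≤ (m:ℝ) := by exact_mod_cast hcon
          exact h (le_trans hk1m hmle)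
        have h2 : m + 2 ≤ k := by omega
        have h3 : (m:ℝ) + 2 ≤ (k:ℝ) := by exact_mod_cast h2
        linarith
    have hA0 : ∀ k ∈ T, 0 ≤ A k := by
      intro k hk
      rcases hprop k hk with ⟨hAk, _⟩ | ⟨hAk, _, hk1⟩
      · rw [hAk]; exact Nat.cast_nonneg k
      · rw [hAk]
        have : (1:ℝ) ≤ (k:ℝ) := by exact_mod_cast hk1
        linarith
    have hsubI : ∀ k ∈ T, Ioc (A k) (A k + 1) ⊆ Ioi (0:ℝ) := by
      intro k hk x hx
      exact lt_of_le_of_lt (hA0 k hk) hx.1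
    have hstep : ∀ k ∈ T, f (k:ℝ) ≤ ∫ x in Ioc (A k) (A k + 1), f x := by
      intro k hk
      have hint : IntegrableOn f (Ioc (A k) (A k + 1)) :=
        (integrableAux t α ht hα).mono_set (hsubI k hk)
      have hmono : ∀ x ∈ Ioc (A k) (A k + 1), f (k:ℝ) ≤ f x := by
        intro x hx
        rcases hprop k hk with ⟨hAk, hle⟩ | ⟨hAk, hle, hk1⟩
        · rw [hAk] at hx
          rw [hxsdef] at hle
          have hk0 : (0:ℝ) ≤ (k:ℝ) := Nat.cast_nonneg k
          exact monoOn t α ht hα ⟨hk0, by linarith⟩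
            ⟨by linarith [hx.1], by linarith [hx.2]⟩ hx.1.le
        · rw [hAk] at hx
          rw [hxsdef] at hle
          have hx2 : x ≤ (k:ℝ) := by linarith [hx.2]
          exact antiOn t α ht hα (Set.mem_Ici.2 (by linarith [hx.1]))
            (Set.mem_Ici.2 (by linarith)) hx2
      calc f (k:ℝ) = ∫ _ in Ioc (A k) (A k + 1), f (k:ℝ) := by
            rw [setIntegral_const, Real.volume_real_Ioc,
              show A k + 1 - A k = 1 by ring, max_eq_left zero_le_one, one_smul]
        _ ≤ ∫ x in Ioc (A k) (A k + 1), f x := by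
            apply setIntegral_mono_on (integrableOn_const ?_) hint
              measurableSet_Ioc hmono
            rw [Real.volume_Ioc]
            exact ENNReal.ofReal_ne_top
    have hdisj : Set.Pairwise ↑T (Function.onFun Disjoint (fun k => Ioc (A k) (A k + 1))) := by
      intro i hi j hj hij
      have hi' : i ∈ T := hi
      have hj' : j ∈ T := hj
      simp only [Function.onFun]
      rw [Set.Ioc_disjoint_Ioc]
      have hcast : i ≠ j → ((i:ℝ) + 1 ≤ j ∨ (j:ℝ) + 1 ≤ i) := by
        intro hne
        rcases lt_or_gt_of_ne hne with h | h
        · left; exact_mod_cast h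
        · right; exact_mod_cast h
      rcases hprop i hi' with ⟨hAi, hlei⟩ | ⟨hAi, hlei, hi1⟩ <;>
        rcases hprop j hj' with ⟨hAj, hlej⟩ | ⟨hAj, hlej, hj1⟩ <;>
        rw [hAi, hAj] <;> rcases hcast hij with h | h
      · exact le_trans (min_le_left _ _) (le_trans h (le_max_right _ _))
      · exact le_trans (min_le_right _ _) (le_trans h (le_max_left _ _))
      · exact le_trans (min_le_left _ _) (le_trans (le_trans hlei hlej) (le_max_right _ _))
      · exact le_trans (min_le_left _ _) (le_trans (le_trans hlei hlej) (le_max_right _ _))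
      · exact le_trans (min_le_right _ _) (le_trans (le_trans hlej hlei) (le_max_left _ _))
      · exact le_trans (min_le_right _ _) (le_trans (le_trans hlej hlei) (le_max_left _ _))
      · exact le_trans (min_le_left _ _) (le_trans (by linarith) (le_max_right _ _))
      · exact le_trans (min_le_right _ _) (le_trans (by linarith) (le_max_left _ _))
    calc ∑ k ∈ T, f (k:ℝ) ≤ ∑ k ∈ T, ∫ x in Ioc (A k) (A k + 1), f x :=
          Finset.sum_le_sum hstep
      _ = ∫ x in ⋃ k ∈ T, Ioc (A k) (A k + 1), f x :=
          (integral_biUnion_finset T (fun i _ => measurableSet_Ioc) hdisj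
            (fun i hi => (integrableAux t α ht hα).mono_set (hsubI i hi))).symm
      _ ≤ ∫ x in Ioi (0:ℝ), f x := by
          apply setIntegral_mono_set (integrableAux t α ht hα)
          · filter_upwards [self_mem_ae_restrict measurableSet_Ioi] with x hx
            have hx0 : 0 < x := hx
            positivity
          · exact HasSubset.Subset.eventuallyLE (Set.iUnion₂_subset hsubI)
      _ = Real.Gamma (α + 1) * (1 / t) ^ (α + 1) := integralAux t α ht hα


lemma real_sum_bound (n : ℕ) (hn : 1 ≤ n) (r α β₁ w : ℝ) (hr0 : 0 < r) (hr1 : r < 1)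
    (hα : 0 < α) (hβ₁ : 0 < β₁) (hw : 0 < w) (s : Finset ℕ) :
    ∑ j ∈ s, β₁ * (w + ((j:ℝ) + 1) / n) ^ α * r ^ j ≤
      β₁ * max 1 (2 ^ (α - 1)) *
        (w ^ α / (1 - r) +
          (2 * (α / Real.exp 1) ^ α * Real.log (1 / r) + Real.Gamma (α + 1)) /
            (r * (n:ℝ) ^ α * Real.log (1 / r) ^ (α + 1))) := by
  have hn0 : (0:ℝ) < n := by exact_mod_cast hn
  set t := Real.log (1 / r) with htdef
  have ht : 0 < t := Real.log_pos (one_lt_one_div hr0 hr1)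
  have hrexp : ∀ k : ℕ, r ^ k = Real.exp (-(t * k)) := by
    intro k
    have e : -(t * k) = (k:ℝ) * Real.log r := by
      rw [htdef, one_div, Real.log_inv]; ring
    rw [e, Real.exp_nat_mul, Real.exp_log hr0]
  obtain ⟨M, hM⟩ : ∃ M, s ⊆ Finset.range M :=
    ⟨s.sup id + 1, fun k hk => Finset.mem_range.2 (Nat.lt_succ_of_le (Finset.le_sup (f := id) hk))⟩
  have hnonneg : ∀ j : ℕ, (0:ℝ) ≤ β₁ * (w + ((j:ℝ) + 1) / n) ^ α * r ^ j := by
    intro j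
    have h1 : (0:ℝ) ≤ (w + ((j:ℝ) + 1) / n) ^ α :=
      Real.rpow_nonneg (by positivity) α
    positivity
  refine le_trans (Finset.sum_le_sum_of_subset_of_nonneg hM (fun j _ _ => hnonneg j)) ?_
  set L := max (1:ℝ) (2 ^ (α - 1)) with hL
  have hL1 : (1:ℝ) ≤ L := le_max_left _ _
  have hL0 : (0:ℝ) ≤ L := by linarith
  have hpt : ∀ j ∈ Finset.range M, β₁ * (w + ((j:ℝ) + 1) / n) ^ α * r ^ j ≤
      (β₁ * L) * ((w ^ α + (((j:ℝ) + 1) / n) ^ α) * r ^ j) := by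
    intro j _
    have h := rpow_add_le_max w (((j:ℝ) + 1) / n) α hw.le (by positivity) hα
    calc β₁ * (w + ((j:ℝ) + 1) / n) ^ α * r ^ j
        ≤ β₁ * (L * (w ^ α + (((j:ℝ) + 1) / n) ^ α)) * r ^ j :=
          mul_le_mul_of_nonneg_right (mul_le_mul_of_nonneg_left h hβ₁.le)
            (pow_nonneg hr0.le j)
      _ = (β₁ * L) * ((w ^ α + (((j:ℝ) + 1) / n) ^ α) * r ^ j) := by ring
  refine le_trans (Finset.sum_le_sum hpt) ?_
  rw [← Finset.mul_sum]
  have hsplit : ∑ j ∈ Finset.range M, (w ^ α + (((j:ℝ) + 1) / n) ^ α) * r ^ j =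
      w ^ α * (∑ j ∈ Finset.range M, r ^ j) +
      ∑ j ∈ Finset.range M, (((j:ℝ) + 1) / n) ^ α * r ^ j := by
    rw [Finset.mul_sum, ← Finset.sum_add_distrib]
    exact Finset.sum_congr rfl (fun j _ => by ring)
  rw [hsplit]
  have hgeom : ∑ j ∈ Finset.range M, r ^ j ≤ (1 - r)⁻¹ := by
    rw [← tsum_geometric_of_lt_one hr0.le hr1]
    exact (summable_geometric_of_lt_one hr0.le hr1).sum_le_tsum _ (fun i _ => pow_nonneg hr0.le i)
  have hbound2 : ∑ j ∈ Finset.range M, (((j:ℝ) + 1) / n) ^ α * r ^ j ≤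
      ((n:ℝ) ^ α)⁻¹ * (r⁻¹ * (2 * (α / (Real.exp 1 * t)) ^ α +
        Real.Gamma (α + 1) * (1 / t) ^ (α + 1))) := by
    have hterm : ∀ j ∈ Finset.range M, (((j:ℝ) + 1) / n) ^ α * r ^ j =
        ((n:ℝ) ^ α)⁻¹ * (r⁻¹ * (((j:ℝ) + 1) ^ α * r ^ (j + 1))) := by
      intro j _
      have h1 : r ≠ 0 := hr0.ne'
      have h2 : ((n:ℝ) : ℝ) ^ α ≠ 0 := (Real.rpow_pos_of_pos hn0 α).ne'
      rw [Real.div_rpow (by positivity) hn0.le, pow_succ]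
      field_simp
    rw [Finset.sum_congr rfl hterm, ← Finset.mul_sum, ← Finset.mul_sum]
    apply mul_le_mul_of_nonneg_left _ (by positivity)
    apply mul_le_mul_of_nonneg_left _ (by positivity)
    have hre : ∑ j ∈ Finset.range M, ((j:ℝ) + 1) ^ α * r ^ (j + 1) =
        ∑ k ∈ Finset.Icc 1 M, (k:ℝ) ^ α * r ^ k := by
      rw [← Finset.Ico_add_one_right_eq_Icc, Finset.sum_Ico_eq_sum_range]
      norm_num
      refine Finset.sum_congr rfl (fun i _ => ?_)
      push_cast
      ring
    rw [hre]
    have : ∑ k ∈ Finset.Icc 1 M, (k:ℝ) ^ α * r ^ k =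
        ∑ k ∈ Finset.Icc 1 M, (k:ℝ) ^ α * Real.exp (-(t * k)) :=
      Finset.sum_congr rfl (fun k _ => by rw [hrexp k])
    rw [this]
    exact core_sum t α ht hα M
  have hfinal : w ^ α * (1 - r)⁻¹ + ((n:ℝ) ^ α)⁻¹ * (r⁻¹ * (2 * (α / (Real.exp 1 * t)) ^ α +
        Real.Gamma (α + 1) * (1 / t) ^ (α + 1))) =
      w ^ α / (1 - r) + (2 * (α / Real.exp 1) ^ α * t + Real.Gamma (α + 1)) /
        (r * (n:ℝ) ^ α * t ^ (α + 1)) := by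
    have e1 : (α / (Real.exp 1 * t)) ^ α = (α / Real.exp 1) ^ α / t ^ α := by
      rw [show α / (Real.exp 1 * t) = (α / Real.exp 1) / t by ring,
        Real.div_rpow (by positivity) ht.le]
    have e2 : ((1:ℝ) / t) ^ (α + 1) = 1 / t ^ (α + 1) := by
      rw [Real.div_rpow zero_le_one ht.le, Real.one_rpow]
    have e3 : t ^ (α + 1) = t ^ α * t := Real.rpow_add_one ht.ne' α
    have htα : (0:ℝ) < t ^ α := Real.rpow_pos_of_pos ht α
    have hnα : (0:ℝ) < (n:ℝ) ^ α := Real.rpow_pos_of_pos hn0 α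
    rw [e1, e2, e3]
    field_simp
  have hWα : (0:ℝ) ≤ w ^ α := Real.rpow_nonneg hw.le α
  calc (β₁ * L) * (w ^ α * (∑ j ∈ Finset.range M, r ^ j) +
        ∑ j ∈ Finset.range M, (((j:ℝ) + 1) / n) ^ α * r ^ j)
      ≤ (β₁ * L) * (w ^ α * (1 - r)⁻¹ + ((n:ℝ) ^ α)⁻¹ * (r⁻¹ *
          (2 * (α / (Real.exp 1 * t)) ^ α + Real.Gamma (α + 1) * (1 / t) ^ (α + 1)))) := by
        apply mul_le_mul_of_nonneg_left _ (by positivity)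
        exact add_le_add (mul_le_mul_of_nonneg_left hgeom hWα) hbound2
    _ = β₁ * L * (w ^ α / (1 - r) + (2 * (α / Real.exp 1) ^ α * t + Real.Gamma (α + 1)) /
          (r * (n:ℝ) ^ α * t ^ (α + 1))) := by rw [hfinal]


end CactusAux

/-- Tail cost bound for cactus distributions:
`Σ_{i≥N} c_{n,i} r^{i-N} ≤ β₁ ℓ_α (w^α/(1-r) + (2(α/e)^α log(1/r) + Γ(α+1))/(r n^α (log(1/r))^{α+1}))`. -/
theorem cactus_tail_cost_bound (n N : ℕ) (hn : 1 ≤ n) (hnN : n < N)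
    (r : ℝ) (hr : r ∈ Set.Ioo (0 : ℝ) 1)
    (α β₁ : ℝ) (hα : 0 < α) (hβ₁ : 0 < β₁)
    (c : ℝ → ℝ) (hc0 : ∀ x, 0 ≤ c x) (hcm : ∀ x y : ℝ, |x| ≤ |y| → c x ≤ c y)
    (w : ℝ) (hw : w = ((N : ℝ) - 1/2) / n)
    (hcb : ∀ x : ℝ, w ≤ x → c x ≤ β₁ * x ^ α) :
    (∑' j : ℕ, (∫⁻ x in Jset n ((N : ℤ) + (j : ℤ)), ENNReal.ofReal ((n : ℝ) * c x)) *
        ENNReal.ofReal (r ^ j)) ≤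
      ENNReal.ofReal (β₁ * max 1 (2 ^ (α - 1)) *
        (w ^ α / (1 - r) +
          (2 * (α / Real.exp 1) ^ α * Real.log (1 / r) + Real.Gamma (α + 1)) /
            (r * (n : ℝ) ^ α * Real.log (1 / r) ^ (α + 1)))) := by
  obtain ⟨hr0, hr1⟩ := hr
  have hn0 : (0:ℝ) < n := by exact_mod_cast hn
  have hN2 : 2 ≤ N := by omega
  have hN2' : (2:ℝ) ≤ N := by exact_mod_cast hN2
  have hw0 : 0 < w := by
    rw [hw]; apply div_pos (by linarith) hn0
  have stepA : ∀ j : ℕ, (∫⁻ x in Jset n ((N : ℤ) + (j : ℤ)), ENNReal.ofReal ((n : ℝ) * c x)) ≤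
      ENNReal.ofReal (β₁ * (w + ((j:ℝ) + 1) / n) ^ α) := by
    intro j
    have hi : (0:ℤ) < (N : ℤ) + (j : ℤ) := by
      have : (1:ℤ) ≤ (N : ℤ) := by exact_mod_cast (by omega : 1 ≤ N)
      omega
    rw [Jset, if_pos hi]
    have hj0 : (0:ℝ) ≤ (j:ℝ) := Nat.cast_nonneg j
    have hcast : (((N : ℤ) + (j : ℤ) : ℤ) : ℝ) = (N:ℝ) + (j:ℝ) := by push_cast; ring
    set a := ((((N : ℤ) + (j : ℤ) : ℤ) : ℝ) - 1/2) / n with ha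
    set b := ((((N : ℤ) + (j : ℤ) : ℤ) : ℝ) + 1/2) / n with hb
    have hbw : b = w + ((j:ℝ) + 1) / n := by
      rw [hb, hcast, hw, ← add_div]
      ring_nf
    have ha0 : 0 < a := by
      rw [ha, hcast]
      apply div_pos (by linarith) hn0
    have hb0 : 0 < b := by
      rw [hb, hcast]
      apply div_pos (by linarith) hn0
    have hwb : w ≤ b := by
      rw [hbw]
      have : (0:ℝ) ≤ ((j:ℝ) + 1) / n := by positivity
      linarith
    have hba : b - a = 1 / n := by
      rw [ha, hb, div_sub_div_same]
      ring_nf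
    have hcx : ∀ x ∈ Set.Ioc a b,
        ENNReal.ofReal ((n:ℝ) * c x) ≤ ENNReal.ofReal ((n:ℝ) * (β₁ * b ^ α)) := by
      intro x hx
      apply ENNReal.ofReal_le_ofReal
      have hx0 : 0 < x := lt_trans ha0 hx.1
      have h1 : c x ≤ c b := hcm x b (by rw [abs_of_pos hx0, abs_of_pos hb0]; exact hx.2)
      have h2 : c b ≤ β₁ * b ^ α := hcb b hwb
      exact mul_le_mul_of_nonneg_left (le_trans h1 h2) hn0.le
    calc ∫⁻ x in Set.Ioc a b, ENNReal.ofReal ((n:ℝ) * c x)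
        ≤ ∫⁻ _ in Set.Ioc a b, ENNReal.ofReal ((n:ℝ) * (β₁ * b ^ α)) :=
          setLIntegral_mono' measurableSet_Ioc hcx
      _ = ENNReal.ofReal ((n:ℝ) * (β₁ * b ^ α)) * volume (Set.Ioc a b) :=
          setLIntegral_const _ _
      _ = ENNReal.ofReal ((n:ℝ) * (β₁ * b ^ α)) * ENNReal.ofReal (1 / n) := by
          rw [Real.volume_Ioc, hba]
      _ = ENNReal.ofReal (β₁ * b ^ α) := by
          rw [← ENNReal.ofReal_mul (by positivity)]
          congr 1
          field_simp
      _ = ENNReal.ofReal (β₁ * (w + ((j:ℝ) + 1) / n) ^ α) := by rw [hbw]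
  calc (∑' j : ℕ, (∫⁻ x in Jset n ((N : ℤ) + (j : ℤ)), ENNReal.ofReal ((n : ℝ) * c x)) *
        ENNReal.ofReal (r ^ j))
      ≤ ∑' j : ℕ, ENNReal.ofReal (β₁ * (w + ((j:ℝ) + 1) / n) ^ α * r ^ j) := by
        apply ENNReal.tsum_le_tsum
        intro j
        rw [ENNReal.ofReal_mul (by
          exact mul_nonneg hβ₁.le (Real.rpow_nonneg (by positivity) α))]
        exact mul_le_mul_left (stepA j) _
    _ ≤ _ := by
        rw [ENNReal.tsum_eq_iSup_sum]
        apply iSup_le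
        intro s
        rw [← ENNReal.ofReal_sum_of_nonneg (fun i _ => by
          exact mul_nonneg (mul_nonneg hβ₁.le (Real.rpow_nonneg (by positivity) α))
            (pow_nonneg hr0.le i))]
        exact ENNReal.ofReal_le_ofReal
          (CactusAux.real_sum_bound n hn r α β₁ w hr0 hr1 hα hβ₁ hw0 s)

end
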